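/- Let d ≥ 1, N ≥ 1, and k ∈ {1, …, N}, and set v_i = (1 − (i−1)/N)^k − (1 − i/N)^k for i ∈ {1, …, N}. Then ∑_{i=1}^N v_i (i/(N+1))^{1/d} ≤ 2e k^{−1/d}. -/

import Mathlib

open Finset

private lemma tangent_rpow (x ε α : ℝ) (hx : 0 ≤ x) (hε : 0 < ε) (hα : 0 < α)
    (hα1 : α ≤ 1) : x ^ α ≤ ε ^ α + ε ^ (α - 1) * x := by
  rcases le_or_gt x ε with h | h
  · have h1 : x ^ α ≤ ε ^ α := Real.rpow_le_rpow hx h hα.le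
    have h2 : 0 ≤ ε ^ (α - 1) * x := mul_nonneg (Real.rpow_nonneg hε.le _) hx
    linarith
  · have hx0 : 0 < x := hε.trans h
    have h1 : x ^ α = x ^ (α - 1) * x := by
      rw [← Real.rpow_add_one hx0.ne' (α - 1)]; ring_nf
    have h2 : x ^ (α - 1) ≤ ε ^ (α - 1) :=
      Real.rpow_le_rpow_of_nonpos hε h.le (by linarith)
    have h3 : x ^ (α - 1) * x ≤ ε ^ (α - 1) * x :=
      mul_le_mul_of_nonneg_right h2 hx
    have h4 : 0 ≤ ε ^ α := Real.rpow_nonneg hε.le _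
    rw [h1]; linarith

private lemma abel_sum (f : ℕ → ℝ) (n : ℕ) :
    ∑ i ∈ range n, (f i - f (i + 1)) * ((i : ℝ) + 1)
      = (∑ i ∈ range n, f i) - n * f n := by
  induction n with
  | zero => simp
  | succ n ih =>
    rw [Finset.sum_range_succ, ih, Finset.sum_range_succ]
    push_cast
    ring

theorem bagged_one_nn_weights_bound
    (d N k : ℕ) (hd : 1 ≤ d) (hN : 1 ≤ N) (hk : 1 ≤ k) (hkN : k ≤ N) :
    ∑ i : Fin N,
        ((1 - (i.1 : ℝ) / N) ^ k - (1 - ((i.1 : ℝ) + 1) / N) ^ k) *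
          (((i.1 : ℝ) + 1) / ((N : ℝ) + 1)) ^ ((1 : ℝ) / d) ≤
      2 * Real.exp 1 * (k : ℝ) ^ (-(1 : ℝ) / d) := by
  have hN0 : (0 : ℝ) < N := by exact_mod_cast hN
  have hk0 : (0 : ℝ) < k := by exact_mod_cast hk
  have hkN' : (k : ℝ) ≤ N := by exact_mod_cast hkN
  set α : ℝ := 1 / d with hα_def
  have hd0 : (0 : ℝ) < d := by exact_mod_cast hd
  have hα0 : 0 < α := by positivity
  have hα1 : α ≤ 1 := by
    rw [hα_def, div_le_one hd0]; exact_mod_cast hd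
  set f : ℕ → ℝ := fun i => (1 - (i : ℝ) / N) ^ k with hf_def
  -- basic facts about f
  have hbase : ∀ i ≤ N, 0 ≤ 1 - (i : ℝ) / N := by
    intro i hi
    have : (i : ℝ) ≤ N := by exact_mod_cast hi
    have := div_le_one_of_le₀ this hN0.le
    linarith
  have hf_nonneg : ∀ i ≤ N, 0 ≤ f i := fun i hi => pow_nonneg (hbase i hi) k
  have hfN : f N = 0 := by
    simp only [hf_def, div_self hN0.ne', sub_self]
    exact zero_pow (by omega)
  have hf0 : f 0 = 1 := by simp [hf_def]
  -- v i ≥ 0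
  have hv_nonneg : ∀ i < N, 0 ≤ f i - f (i + 1) := by
    intro i hi
    have h1 : 0 ≤ 1 - ((i : ℝ) + 1) / N := by
      have := hbase (i + 1) (by omega); push_cast at this ⊢; linarith
    have h2 : 1 - ((i : ℝ) + 1) / N ≤ 1 - (i : ℝ) / N := by
      have : (i : ℝ) / N ≤ ((i : ℝ) + 1) / N := by gcongr; linarith
      linarith
    have h3 : f (i + 1) ≤ f i := by
      simp only [hf_def]
      push_cast
      exact pow_le_pow_left₀ h1 h2 k
    linarith
  -- f i ≤ r^i for i ≤ N, where r = exp(-(k/N))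
  set r : ℝ := Real.exp (-((k : ℝ) / N)) with hr_def
  have hr0 : 0 < r := Real.exp_pos _
  have hr1 : r < 1 := by
    rw [hr_def, Real.exp_lt_one_iff]
    have : 0 < (k : ℝ) / N := by positivity
    linarith
  have hf_exp : ∀ i ≤ N, f i ≤ r ^ i := by
    intro i hi
    have h1 : 1 - (i : ℝ) / N ≤ Real.exp (-((i : ℝ) / N)) := by
      have := Real.add_one_le_exp (-((i : ℝ) / N))
      linarith
    calc f i ≤ Real.exp (-((i : ℝ) / N)) ^ k := pow_le_pow_left₀ (hbase i hi) h1 k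
      _ = r ^ i := by
          rw [hr_def, ← Real.exp_nat_mul, ← Real.exp_nat_mul]; ring_nf
  -- geometric bound: ∑_{i<N} f i ≤ e * N / k
  have hgeom : ∑ i ∈ range N, f i ≤ Real.exp 1 * N / k := by
    have h1 : ∑ i ∈ range N, f i ≤ ∑ i ∈ range N, r ^ i :=
      Finset.sum_le_sum fun i hi => hf_exp i (Finset.mem_range.mp hi).le
    have h2 : ∑ i ∈ range N, r ^ i = (1 - r ^ N) / (1 - r) := by
      rw [geom_sum_eq hr1.ne, div_eq_div_iff (by intro h; apply hr1.ne; linarith [sub_eq_zero.mp h]) (by intro h; apply hr1.ne; linarith [sub_eq_zero.mp h])]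
      ring
    have hrN : 0 ≤ r ^ N := pow_nonneg hr0.le N
    have h3 : (1 - r ^ N) / (1 - r) ≤ 1 / (1 - r) := by
      gcongr
      · linarith
    -- 1 - r ≥ (k/N) / e
    have hx1 : (k : ℝ) / N ≤ 1 := div_le_one_of_le₀ hkN' hN0.le
    have h4 : (k : ℝ) / N / Real.exp 1 ≤ 1 - r := by
      -- 1 - r ≥ r * (k/N) ≥ e⁻¹ * (k/N)
      have hb : (k : ℝ) / N + 1 ≤ Real.exp ((k : ℝ) / N) := Real.add_one_le_exp _
      have hc : r * ((k : ℝ) / N + 1) ≤ 1 := by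
        rw [hr_def]
        calc Real.exp (-((k : ℝ) / N)) * ((k : ℝ) / N + 1)
            ≤ Real.exp (-((k : ℝ) / N)) * Real.exp ((k : ℝ) / N) :=
              mul_le_mul_of_nonneg_left hb (Real.exp_pos _).le
          _ = 1 := by rw [← Real.exp_add]; simp
        -- done
      have hd' : Real.exp (-(1 : ℝ)) ≤ r := by
        rw [hr_def]
        exact Real.exp_le_exp.mpr (by linarith)
      have he : Real.exp (-(1:ℝ)) = 1 / Real.exp 1 := by
        rw [Real.exp_neg]; ring
      have hf2 : r * ((k:ℝ)/N) ≤ 1 - r := by nlinarith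
      have hg : (1 / Real.exp 1) * ((k:ℝ)/N) ≤ r * ((k:ℝ)/N) := by
        apply mul_le_mul_of_nonneg_right _ (by positivity)
        rw [← he]; exact hd'
      calc (k : ℝ) / N / Real.exp 1 = (1 / Real.exp 1) * ((k:ℝ)/N) := by ring
        _ ≤ 1 - r := le_trans hg hf2
    have h5 : 1 / (1 - r) ≤ Real.exp 1 * N / k := by
      rw [div_le_div_iff₀ (by linarith) (by positivity)]
      have h4' : (k : ℝ) ≤ (1 - r) * (N * Real.exp 1) := by
        rw [div_div, div_le_iff₀ (by positivity)] at h4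
        exact h4
      calc (1:ℝ) * k = (k:ℝ) := by ring
        _ ≤ (1 - r) * (N * Real.exp 1) := h4'
        _ = Real.exp 1 * N * (1 - r) := by ring
    calc ∑ i ∈ range N, f i ≤ (1 - r ^ N) / (1 - r) := h2 ▸ h1
      _ ≤ 1 / (1 - r) := h3
      _ ≤ Real.exp 1 * N / k := h5
  -- linear weighted sum
  have hlin : ∑ i ∈ range N, (f i - f (i + 1)) * (((i : ℝ) + 1) / ((N : ℝ) + 1))
      ≤ Real.exp 1 / k := by
    have h1 : ∑ i ∈ range N, (f i - f (i + 1)) * (((i : ℝ) + 1) / ((N : ℝ) + 1))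
        = (∑ i ∈ range N, (f i - f (i + 1)) * ((i : ℝ) + 1)) / ((N : ℝ) + 1) := by
      rw [Finset.sum_div]
      exact Finset.sum_congr rfl fun i _ => by ring
    rw [h1, abel_sum, hfN, mul_zero, sub_zero]
    rw [div_le_div_iff₀ (by linarith) hk0]
    have : Real.exp 1 * N / k * k = Real.exp 1 * N := by field_simp
    calc (∑ i ∈ range N, f i) * k ≤ (Real.exp 1 * N / k) * k :=
          mul_le_mul_of_nonneg_right hgeom hk0.le
      _ = Real.exp 1 * N := this
      _ ≤ Real.exp 1 * (N + 1) := by nlinarith [Real.exp_pos 1]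
  -- total mass ≤ 1
  have hmass : ∑ i ∈ range N, (f i - f (i + 1)) = 1 := by
    rw [Finset.sum_range_sub' f N, hf0, hfN, sub_zero]
  -- now the main estimate via the tangent lemma with ε = 1/k
  have hmain : ∀ i < N,
      (f i - f (i + 1)) * (((i : ℝ) + 1) / ((N : ℝ) + 1)) ^ α
        ≤ (f i - f (i + 1)) * (((1:ℝ)/k) ^ α + ((1:ℝ)/k) ^ (α - 1) *
            (((i : ℝ) + 1) / ((N : ℝ) + 1))) := by
    intro i hi
    apply mul_le_mul_of_nonneg_left _ (hv_nonneg i hi)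
    exact tangent_rpow _ _ _ (by positivity) (by positivity) hα0 hα1
  have hsum_fin : ∑ i : Fin N,
        ((1 - (i.1 : ℝ) / N) ^ k - (1 - ((i.1 : ℝ) + 1) / N) ^ k) *
          (((i.1 : ℝ) + 1) / ((N : ℝ) + 1)) ^ ((1 : ℝ) / d)
      = ∑ i ∈ range N, (f i - f (i + 1)) * (((i : ℝ) + 1) / ((N : ℝ) + 1)) ^ α := by
    rw [Fin.sum_univ_eq_sum_range (fun j : ℕ =>
      ((1 - (j : ℝ) / N) ^ k - (1 - ((j : ℝ) + 1) / N) ^ k) *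
        (((j : ℝ) + 1) / ((N : ℝ) + 1)) ^ ((1 : ℝ) / d)) N]
    refine Finset.sum_congr rfl fun i _ => ?_
    simp only [hf_def]
    rw [hα_def]
    push_cast
    ring_nf
  rw [hsum_fin]
  have step1 : ∑ i ∈ range N, (f i - f (i + 1)) * (((i : ℝ) + 1) / ((N : ℝ) + 1)) ^ α
      ≤ ((1:ℝ)/k) ^ α * (∑ i ∈ range N, (f i - f (i + 1)))
        + ((1:ℝ)/k) ^ (α - 1) *
          (∑ i ∈ range N, (f i - f (i + 1)) * (((i : ℝ) + 1) / ((N : ℝ) + 1))) := by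
    rw [Finset.mul_sum, Finset.mul_sum, ← Finset.sum_add_distrib]
    refine Finset.sum_le_sum fun i hi => ?_
    have := hmain i (Finset.mem_range.mp hi)
    calc (f i - f (i + 1)) * (((i : ℝ) + 1) / ((N : ℝ) + 1)) ^ α
        ≤ (f i - f (i + 1)) * (((1:ℝ)/k) ^ α + ((1:ℝ)/k) ^ (α - 1) *
            (((i : ℝ) + 1) / ((N : ℝ) + 1))) := this
      _ = ((1:ℝ)/k) ^ α * (f i - f (i + 1))
          + ((1:ℝ)/k) ^ (α - 1) * ((f i - f (i + 1)) * (((i : ℝ) + 1) / ((N : ℝ) + 1))) := by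
            ring
  have hA : ((1:ℝ)/k) ^ α = (k:ℝ) ^ (-α) := by
    rw [one_div, Real.inv_rpow hk0.le, ← Real.rpow_neg hk0.le]
  have hC : ((1:ℝ)/k) ^ (α - 1) = (k:ℝ) ^ (1 - α) := by
    rw [one_div, Real.inv_rpow hk0.le, ← Real.rpow_neg hk0.le]
    ring_nf
  have hB : ((1:ℝ)/k) ^ (α - 1) * (Real.exp 1 / k) = Real.exp 1 * (k:ℝ) ^ (-α) := by
    rw [hC, div_eq_mul_inv, ← Real.rpow_neg_one (k:ℝ)]
    rw [mul_comm (Real.exp 1), ← mul_assoc, ← Real.rpow_add hk0]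
    ring_nf
  have hvb_le : ((1:ℝ)/k) ^ (α - 1) *
      (∑ i ∈ range N, (f i - f (i + 1)) * (((i : ℝ) + 1) / ((N : ℝ) + 1)))
      ≤ ((1:ℝ)/k) ^ (α - 1) * (Real.exp 1 / k) :=
    mul_le_mul_of_nonneg_left hlin (Real.rpow_nonneg (by positivity) _)
  have hkpos : 0 ≤ (k:ℝ) ^ (-α) := Real.rpow_nonneg hk0.le _
  have he2 : 2 ≤ Real.exp 1 := by
    have := Real.add_one_le_exp 1
    linarith
  have hneg : (-(1:ℝ))/d = -α := by rw [hα_def]; ring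
  rw [hneg]
  calc ∑ i ∈ range N, (f i - f (i + 1)) * (((i : ℝ) + 1) / ((N : ℝ) + 1)) ^ α
      ≤ ((1:ℝ)/k) ^ α * (∑ i ∈ range N, (f i - f (i + 1)))
        + ((1:ℝ)/k) ^ (α - 1) *
          (∑ i ∈ range N, (f i - f (i + 1)) * (((i : ℝ) + 1) / ((N : ℝ) + 1))) := step1
    _ ≤ (k:ℝ) ^ (-α) + Real.exp 1 * (k:ℝ) ^ (-α) := by
        rw [hmass, mul_one, hA]
        linarith [hvb_le, hB]
    _ ≤ 2 * Real.exp 1 * (k:ℝ) ^ (-α) := by nlinarith
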